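/- There exists b* > 1/3 such that for every b ∈ (0,b*) and every x ∈ (0,∞), one has φ_1(x) − b·φ_{1,b}(x) > 0. -/

import Mathlib

open MeasureTheory Real

noncomputable section

namespace DCV18

/-- `φ_1(x) = ∫_0^{2π} e^{−2x·sin(η/2)} cos η dη`. -/
def phi1 (x : ℝ) : ℝ :=
  ∫ η in (0:ℝ)..(2*π), Real.exp (-2*x*Real.sin (η/2)) * Real.cos η

/-- `φ_{1,b}(x) = ∫_0^{2π} e^{−x·√(1+b²−2b·cos η)} cos η dη`. -/
def phi1b (b x : ℝ) : ℝ :=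
  ∫ η in (0:ℝ)..(2*π), Real.exp (-x * Real.sqrt (1 + b^2 - 2*b*Real.cos η)) * Real.cos η

/-- The integrand obtained after one integration by parts in `φ_1 − b φ_{1,b}`. -/
def I (b x η : ℝ) : ℝ :=
  x * Real.cos (η/2) * Real.sin η * Real.exp (-2*x*Real.sin (η/2)) -
    x * b^2 * Real.sin η ^ 2 *
      Real.exp (-x * Real.sqrt (1 + b^2 - 2*b*Real.cos η)) / Real.sqrt (1 + b^2 - 2*b*Real.cos η)

lemma ibp1 (x : ℝ) : phi1 x =
    ∫ η in (0:ℝ)..(2*π), x * Real.cos (η/2) * Real.sin η * Real.exp (-2*x*Real.sin (η/2)) := by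
  have hd : ∀ η ∈ Set.uIcc (0:ℝ) (2*π),
      HasDerivAt (fun η => Real.exp (-2*x*Real.sin (η/2)) * Real.sin η)
        (Real.exp (-2*x*Real.sin (η/2)) * Real.cos η -
          x * Real.cos (η/2) * Real.sin η * Real.exp (-2*x*Real.sin (η/2))) η := by
    intro η _
    have h1 : HasDerivAt (fun η : ℝ => η/2) (1/2) η := (hasDerivAt_id η).div_const 2
    have h2 : HasDerivAt (fun η : ℝ => Real.sin (η/2)) (Real.cos (η/2) * (1/2)) η :=
      h1.sin
    have h3 : HasDerivAt (fun η : ℝ => -2*x*Real.sin (η/2)) (-2*x*(Real.cos (η/2) * (1/2))) η :=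
      h2.const_mul (-2*x)
    have h4 : HasDerivAt (fun η : ℝ => Real.exp (-2*x*Real.sin (η/2)))
        (Real.exp (-2*x*Real.sin (η/2)) * (-2*x*(Real.cos (η/2) * (1/2)))) η := h3.exp
    have h5 := h4.mul (Real.hasDerivAt_sin η)
    refine h5.congr_deriv ?_
    ring
  have hcont : Continuous (fun η : ℝ => Real.exp (-2*x*Real.sin (η/2)) * Real.cos η -
      x * Real.cos (η/2) * Real.sin η * Real.exp (-2*x*Real.sin (η/2))) := by
    fun_prop
  have h0 := intervalIntegral.integral_eq_sub_of_hasDerivAt hd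
    (hcont.intervalIntegrable _ _)
  simp only [Real.sin_two_pi, Real.sin_zero, mul_zero, sub_zero, sub_self] at h0
  have hint1 : IntervalIntegrable (fun η : ℝ => Real.exp (-2*x*Real.sin (η/2)) * Real.cos η)
      volume 0 (2*π) := by
    apply Continuous.intervalIntegrable; fun_prop
  have hint2 : IntervalIntegrable
      (fun η : ℝ => x * Real.cos (η/2) * Real.sin η * Real.exp (-2*x*Real.sin (η/2)))
      volume 0 (2*π) := by
    apply Continuous.intervalIntegrable; fun_prop
  rw [intervalIntegral.integral_sub hint1 hint2] at h0
  unfold phi1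
  linarith

lemma q_pos {b : ℝ} (hb : 0 < b) (hb1 : b < 1) (η : ℝ) :
    0 < 1 + b^2 - 2*b*Real.cos η := by
  nlinarith [Real.cos_le_one η]

lemma phi1b_integrand_cont {b : ℝ} (hb : 0 < b) (hb1 : b < 1) (x : ℝ) :
    Continuous (fun η : ℝ => x * b * Real.sin η ^ 2 *
      Real.exp (-x * Real.sqrt (1 + b^2 - 2*b*Real.cos η)) /
        Real.sqrt (1 + b^2 - 2*b*Real.cos η)) := by
  apply Continuous.div
  · fun_prop
  · fun_prop
  · exact fun η => ne_of_gt (Real.sqrt_pos.2 (q_pos hb hb1 η))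

lemma ibp2 {b : ℝ} (hb : 0 < b) (hb1 : b < 1) (x : ℝ) : phi1b b x =
    ∫ η in (0:ℝ)..(2*π), x * b * Real.sin η ^ 2 *
      Real.exp (-x * Real.sqrt (1 + b^2 - 2*b*Real.cos η)) /
        Real.sqrt (1 + b^2 - 2*b*Real.cos η) := by
  have hq : ∀ η : ℝ, 0 < 1 + b^2 - 2*b*Real.cos η := q_pos hb hb1
  have hsq : ∀ η : ℝ, 0 < Real.sqrt (1 + b^2 - 2*b*Real.cos η) :=
    fun η => Real.sqrt_pos.2 (hq η)
  have hd : ∀ η ∈ Set.uIcc (0:ℝ) (2*π),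
      HasDerivAt (fun η => Real.exp (-x * Real.sqrt (1 + b^2 - 2*b*Real.cos η)) * Real.sin η)
        (Real.exp (-x * Real.sqrt (1 + b^2 - 2*b*Real.cos η)) * Real.cos η -
          x * b * Real.sin η ^ 2 *
            Real.exp (-x * Real.sqrt (1 + b^2 - 2*b*Real.cos η)) /
              Real.sqrt (1 + b^2 - 2*b*Real.cos η)) η := by
    intro η _
    have h1 : HasDerivAt (fun η : ℝ => 1 + b^2 - 2*b*Real.cos η) (2*b*Real.sin η) η := by
      have := ((Real.hasDerivAt_cos η).const_mul (2*b)).const_sub (1 + b^2)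
      refine this.congr_deriv ?_
      ring
    have h2 : HasDerivAt (fun η : ℝ => Real.sqrt (1 + b^2 - 2*b*Real.cos η))
        (2*b*Real.sin η / (2 * Real.sqrt (1 + b^2 - 2*b*Real.cos η))) η :=
      h1.sqrt (ne_of_gt (hq η))
    have h3 : HasDerivAt (fun η : ℝ => -x * Real.sqrt (1 + b^2 - 2*b*Real.cos η))
        (-x * (2*b*Real.sin η / (2 * Real.sqrt (1 + b^2 - 2*b*Real.cos η)))) η :=
      h2.const_mul (-x)
    have h4 := h3.exp
    have h5 := h4.mul (Real.hasDerivAt_sin η)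
    refine h5.congr_deriv ?_
    have hne := ne_of_gt (hsq η)
    field_simp
    ring
  have hcont2 := phi1b_integrand_cont hb hb1 x
  have hcont1 : Continuous (fun η : ℝ =>
      Real.exp (-x * Real.sqrt (1 + b^2 - 2*b*Real.cos η)) * Real.cos η) := by fun_prop
  have h0 := intervalIntegral.integral_eq_sub_of_hasDerivAt hd
    ((hcont1.sub hcont2).intervalIntegrable _ _)
  simp only [Real.sin_two_pi, Real.sin_zero, mul_zero, sub_zero, sub_self] at h0
  rw [intervalIntegral.integral_sub (hcont1.intervalIntegrable _ _)
    (hcont2.intervalIntegrable _ _)] at h0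
  unfold phi1b
  linarith

set_option maxHeartbeats 2000000 in
lemma good_bound {b x t : ℝ} (hb : 0 < b) (hb' : b ≤ 0.34) (hx : 0 < x)
    (ht : 0 ≤ t) (ht' : t ≤ 0.8) :
    0.6985 * (x * Real.exp (-(0.8*x))) * t ≤ I b x t := by
  have ht2 : 0 ≤ t/2 := by linarith
  have ht2' : t/2 ≤ 0.4 := by linarith
  have hpi : (3.14:ℝ) < π := by linarith [Real.pi_gt_d6]
  have hs0 : 0 ≤ Real.sin (t/2) := Real.sin_nonneg_of_nonneg_of_le_pi ht2 (by linarith)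
  have hsle : Real.sin (t/2) ≤ t/2 := Real.sin_le ht2
  have hsge : 0.48*t ≤ Real.sin (t/2) := by
    rcases eq_or_lt_of_le ht with h | h
    · simp [← h]
    · have h2 : t/2 - (t/2)^3/4 < Real.sin (t/2) := by have := Real.sin_gt_sub_cube (x := t/2) (by linarith); nlinarith [pow_pos (show (0:ℝ) < t/2 by linarith) 3]
      nlinarith [mul_nonneg h.le (show (0:ℝ) ≤ 0.64 - t^2 by nlinarith)]
  have hc92 : 0.92 ≤ Real.cos (t/2) := by
    have := Real.one_sub_sq_div_two_le_cos (x := t/2)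
    nlinarith
  have hc1 : Real.cos (t/2) ≤ 1 := Real.cos_le_one _
  have hcost : Real.cos t = 1 - 2*Real.sin (t/2)^2 := by
    have h := Real.cos_two_mul (t/2)
    rw [show 2*(t/2) = t by ring] at h
    nlinarith [Real.sin_sq_add_cos_sq (t/2)]
  have hsin : Real.sin t = 2*Real.sin (t/2)*Real.cos (t/2) := by
    have h := Real.sin_two_mul (t/2)
    rw [show 2*(t/2) = t by ring] at h
    exact h
  have hQarg : 1 + b^2 - 2*b*Real.cos t = (1-b)^2 + 4*b*Real.sin (t/2)^2 := by
    rw [hcost]; ring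
  unfold I
  rw [hsin, hQarg]
  generalize hs_def : Real.sin (t/2) = s at *
  generalize hc_def : Real.cos (t/2) = c at *
  have hQpos : 0 < (1-b)^2 + 4*b*s^2 := by nlinarith [sq_nonneg s, mul_nonneg hb.le (sq_nonneg s)]
  have hRpos : 0 < Real.sqrt ((1-b)^2 + 4*b*s^2) := Real.sqrt_pos.2 hQpos
  have hs2 : s^2 ≤ 0.16 := by
    nlinarith [mul_nonneg (show (0:ℝ) ≤ 0.4-s by linarith) (show (0:ℝ) ≤ 0.4+s by linarith)]
  have hRlb : 1-b ≤ Real.sqrt ((1-b)^2 + 4*b*s^2) := by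
    calc 1-b = Real.sqrt ((1-b)^2) := (Real.sqrt_sq (by linarith)).symm
      _ ≤ _ := Real.sqrt_le_sqrt (by nlinarith [mul_nonneg hb.le (sq_nonneg s)])
  have hR2s : 2*s ≤ Real.sqrt ((1-b)^2 + 4*b*s^2) := by
    have h0 : (0:ℝ) ≤ (1-b) - 4*s^2 := by nlinarith
    have h1 : (2*s)^2 ≤ (1-b)^2 + 4*b*s^2 := by
      nlinarith [mul_nonneg (show (0:ℝ) ≤ 1-b by linarith) h0]
    calc 2*s = Real.sqrt ((2*s)^2) := (Real.sqrt_sq (by linarith)).symm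
      _ ≤ _ := Real.sqrt_le_sqrt h1
  have he21 : Real.exp (-x * Real.sqrt ((1-b)^2 + 4*b*s^2)) ≤ Real.exp (-2*x*s) :=
    Real.exp_le_exp.2 (by nlinarith [mul_nonneg hx.le (sub_nonneg.2 hR2s)])
  have he1E : Real.exp (-(0.8*x)) ≤ Real.exp (-2*x*s) :=
    Real.exp_le_exp.2 (by nlinarith [mul_nonneg hx.le (show (0:ℝ) ≤ 0.8 - 2*s by linarith)])
  have he1pos : 0 < Real.exp (-2*x*s) := Real.exp_pos _
  have he2pos : 0 < Real.exp (-x * Real.sqrt ((1-b)^2 + 4*b*s^2)) := Real.exp_pos _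
  have hEpos : 0 < Real.exp (-(0.8*x)) := Real.exp_pos _
  have hnn1 : (0:ℝ) ≤ x*(s^2*c^2) := by positivity
  have key2 : x * b^2 * (2*s*c)^2 * Real.exp (-x * Real.sqrt ((1-b)^2 + 4*b*s^2)) /
        Real.sqrt ((1-b)^2 + 4*b*s^2) ≤ 0.7008*(x*(s^2*(c^2*Real.exp (-2*x*s)))) := by
    rw [div_le_iff₀ hRpos]
    have h1 : b^2*Real.exp (-x * Real.sqrt ((1-b)^2 + 4*b*s^2)) ≤
        0.1156*Real.exp (-2*x*s) := by
      nlinarith [mul_nonneg (show (0:ℝ) ≤ 0.1156 - b^2 by nlinarith) he2pos.le]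
    have h2 : (0.66:ℝ) ≤ Real.sqrt ((1-b)^2 + 4*b*s^2) := by linarith
    calc x*b^2*(2*s*c)^2*Real.exp (-x * Real.sqrt ((1-b)^2 + 4*b*s^2))
        = (4*(x*(s^2*c^2)))*(b^2*Real.exp (-x * Real.sqrt ((1-b)^2 + 4*b*s^2))) := by ring
      _ ≤ (4*(x*(s^2*c^2)))*(0.1156*Real.exp (-2*x*s)) := by
          apply mul_le_mul_of_nonneg_left h1 (by linarith)
      _ ≤ (0.7008*(x*(s^2*(c^2*Real.exp (-2*x*s)))))*0.66 := by
          nlinarith [mul_nonneg hnn1 he1pos.le]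
      _ ≤ _ := by
          apply mul_le_mul_of_nonneg_left h2
          nlinarith [mul_nonneg hnn1 he1pos.le]
  have hc2 : 0.8464 ≤ c^2 := by nlinarith [sq_nonneg (c - 0.92)]
  have hss : 0.8254464*t ≤ s*(2-0.7008*s) := by
    nlinarith [mul_nonneg hs0 (show (0:ℝ) ≤ 0.4 - s by nlinarith)]
  have C1 : 0.6985*t ≤ c^2*(s*(2-0.7008*s)) := by
    nlinarith [mul_le_mul hc2 hss (by linarith) (sq_nonneg c)]
  have C2 : Real.exp (-(0.8*x))*(0.6985*t) ≤
      Real.exp (-2*x*s)*(c^2*(s*(2-0.7008*s))) :=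
    mul_le_mul he1E C1 (by linarith) he1pos.le
  have C3 := mul_le_mul_of_nonneg_left C2 hx.le
  nlinarith [key2, C3]

lemma sin04_lb : (0.388:ℝ) ≤ Real.sin 0.4 := by
  have h1 := Real.sin_two_mul 0.2
  rw [show 2*(0.2:ℝ) = 0.4 by norm_num] at h1
  have h2 : (0.198:ℝ) ≤ Real.sin 0.2 := by
    have := Real.sin_gt_sub_cube (show (0:ℝ) < 0.2 by norm_num)
    nlinarith
  have h3 : (0.98:ℝ) ≤ Real.cos 0.2 := by
    have := Real.one_sub_sq_div_two_le_cos (x := (0.2:ℝ))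
    nlinarith
  nlinarith [mul_nonneg (sub_nonneg.2 h2) (sub_nonneg.2 h3)]

set_option maxHeartbeats 2000000 in
lemma mid_bound {b x t : ℝ} (hb : 0 < b) (hb' : b ≤ 0.34) (hx : 0 < x)
    (ht : 0.8 ≤ t) (ht' : t ≤ 2*π - 0.8) :
    -(0.3966 * (x * Real.exp (-(0.8*x))) * (Real.sin (t/2) * Real.cos (t/2)^2)) ≤ I b x t := by
  have hpi : (3.14:ℝ) < π := by linarith [Real.pi_gt_d6]
  have hpi' : π < 3.15 := Real.pi_lt_d2
  have ht2 : 0.4 ≤ t/2 := by linarith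
  have ht2' : t/2 ≤ π - 0.4 := by linarith
  have hslb : 0.388 ≤ Real.sin (t/2) := by
    rcases le_or_gt (t/2) (π/2) with h | h
    · have := Real.sin_le_sin_of_le_of_le_pi_div_two (by linarith : -(π/2) ≤ (0.4:ℝ)) h ht2
      linarith [sin04_lb]
    · have hsym := Real.sin_pi_sub (π - t/2)
      rw [show π - (π - t/2) = t/2 by ring] at hsym
      have := Real.sin_le_sin_of_le_of_le_pi_div_two (by linarith : -(π/2) ≤ (0.4:ℝ))
        (by linarith : π - t/2 ≤ π/2) (by linarith : (0.4:ℝ) ≤ π - t/2)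
      rw [hsym]
      linarith [sin04_lb]
  have hs1 : Real.sin (t/2) ≤ 1 := Real.sin_le_one _
  have hcost : Real.cos t = 1 - 2*Real.sin (t/2)^2 := by
    have h := Real.cos_two_mul (t/2)
    rw [show 2*(t/2) = t by ring] at h
    nlinarith [Real.sin_sq_add_cos_sq (t/2)]
  have hsin : Real.sin t = 2*Real.sin (t/2)*Real.cos (t/2) := by
    have h := Real.sin_two_mul (t/2)
    rw [show 2*(t/2) = t by ring] at h
    exact h
  have hQarg : 1 + b^2 - 2*b*Real.cos t = (1-b)^2 + 4*b*Real.sin (t/2)^2 := by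
    rw [hcost]; ring
  unfold I
  rw [hsin, hQarg]
  generalize hs_def : Real.sin (t/2) = s at *
  generalize hc_def : Real.cos (t/2) = c at *
  have hs0 : (0:ℝ) ≤ s := by linarith
  have hsc : s^2 + c^2 = 1 := by
    have h := Real.sin_sq_add_cos_sq (t/2)
    rw [hs_def, hc_def] at h
    exact h
  have hc2 : c^2 ≤ 1 := by nlinarith [sq_nonneg s]
  have hQpos : 0 < (1-b)^2 + 4*b*s^2 := by nlinarith [sq_nonneg s, mul_nonneg hb.le (sq_nonneg s)]
  have hRpos : 0 < Real.sqrt ((1-b)^2 + 4*b*s^2) := Real.sqrt_pos.2 hQpos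
  have hs2lb : 0.150544 ≤ s^2 := by nlinarith
  have hR08 : 0.8 ≤ Real.sqrt ((1-b)^2 + 4*b*s^2) := by
    have h1 : (0.8:ℝ)^2 ≤ (1-b)^2 + 4*b*s^2 := by
      nlinarith [mul_nonneg hb.le (sub_nonneg.2 hs2lb),
        mul_nonneg (show (0:ℝ) ≤ 0.34 - b by linarith) (show (0:ℝ) ≤ 1.057824 - b by linarith)]
    calc (0.8:ℝ) = Real.sqrt (0.8^2) := (Real.sqrt_sq (by norm_num)).symm
      _ ≤ _ := Real.sqrt_le_sqrt h1
  have hsqb0 : (0:ℝ) ≤ Real.sqrt b := Real.sqrt_nonneg b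
  have hsqb : Real.sqrt b ≤ 0.5831 := by
    calc Real.sqrt b ≤ Real.sqrt (0.5831^2) := Real.sqrt_le_sqrt (by nlinarith)
      _ = 0.5831 := Real.sqrt_sq (by norm_num)
  have hbsq : b = (Real.sqrt b)^2 := (Real.sq_sqrt hb.le).symm
  have hR2bs : 2*Real.sqrt b*s ≤ Real.sqrt ((1-b)^2 + 4*b*s^2) := by
    have h1 : (2*Real.sqrt b*s)^2 ≤ (1-b)^2 + 4*b*s^2 := by
      nlinarith [sq_nonneg (1-b), sq_nonneg s]
    calc 2*Real.sqrt b*s = Real.sqrt ((2*Real.sqrt b*s)^2) :=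
          (Real.sqrt_sq (by positivity)).symm
      _ ≤ _ := Real.sqrt_le_sqrt h1
  have he2E : Real.exp (-x * Real.sqrt ((1-b)^2 + 4*b*s^2)) ≤ Real.exp (-(0.8*x)) :=
    Real.exp_le_exp.2 (by nlinarith [mul_nonneg hx.le (sub_nonneg.2 hR08)])
  have hEpos : 0 < Real.exp (-(0.8*x)) := Real.exp_pos _
  have he1pos : 0 < Real.exp (-2*x*s) := Real.exp_pos _
  have he2pos : 0 < Real.exp (-x * Real.sqrt ((1-b)^2 + 4*b*s^2)) := Real.exp_pos _
  have hterm1 : 0 ≤ x * c * (2*s*c) * Real.exp (-2*x*s) := by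
    have h : x * c * (2*s*c) * Real.exp (-2*x*s) = 2*(x*(s*(c^2*Real.exp (-2*x*s)))) := by ring
    rw [h]; positivity
  have hu3 : (Real.sqrt b)^3 ≤ 0.1983 := by
    nlinarith [mul_nonneg (show (0:ℝ) ≤ 0.5831 - Real.sqrt b by linarith)
      (show (0:ℝ) ≤ (Real.sqrt b)^2 + 0.5831*Real.sqrt b + 0.5831^2 by positivity)]
  have hterm2 : x * b^2 * (2*s*c)^2 * Real.exp (-x * Real.sqrt ((1-b)^2 + 4*b*s^2)) /
      Real.sqrt ((1-b)^2 + 4*b*s^2) ≤ 0.3966 * (x * Real.exp (-(0.8*x))) * (s*c^2) := by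
    rw [div_le_iff₀ hRpos]
    have hnn : (0:ℝ) ≤ x*(s^2*(c^2*Real.exp (-(0.8*x)))) := by positivity
    calc x * b^2 * (2*s*c)^2 * Real.exp (-x * Real.sqrt ((1-b)^2 + 4*b*s^2))
        = (4*(x*(s^2*c^2)))*(b^2*Real.exp (-x * Real.sqrt ((1-b)^2 + 4*b*s^2))) := by ring
      _ ≤ (4*(x*(s^2*c^2)))*(b^2*Real.exp (-(0.8*x))) := by
          apply mul_le_mul_of_nonneg_left _ (by positivity)
          exact mul_le_mul_of_nonneg_left he2E (by positivity)
      _ = 4*((Real.sqrt b)^2)^2*(x*(s^2*(c^2*Real.exp (-(0.8*x))))) := by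
          rw [← hbsq]; ring
      _ ≤ (0.7932*Real.sqrt b)*(x*(s^2*(c^2*Real.exp (-(0.8*x))))) := by
          apply mul_le_mul_of_nonneg_right _ hnn
          nlinarith [hsqb0, hu3]
      _ = (0.3966 * (x * Real.exp (-(0.8*x))) * (s*c^2))*(2*Real.sqrt b*s) := by ring
      _ ≤ (0.3966 * (x * Real.exp (-(0.8*x))) * (s*c^2))*
            Real.sqrt ((1-b)^2 + 4*b*s^2) := by
          apply mul_le_mul_of_nonneg_left hR2bs (by positivity)
  linarith [hterm1, hterm2]

lemma I_symm (b x t : ℝ) : I b x (2*π - t) = I b x t := by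
  unfold I
  rw [show (2*π - t)/2 = π - t/2 by ring, Real.sin_pi_sub, Real.cos_pi_sub,
    Real.sin_two_pi_sub, Real.cos_two_pi_sub]
  ring

lemma I_cont {b : ℝ} (hb : 0 < b) (hb1 : b < 1) (x : ℝ) : Continuous (I b x) := by
  have hq : ∀ η : ℝ, 0 < 1 + b^2 - 2*b*Real.cos η := q_pos hb hb1
  unfold I
  apply Continuous.sub
  · fun_prop
  · apply Continuous.div
    · fun_prop
    · fun_prop
    · exact fun η => ne_of_gt (Real.sqrt_pos.2 (hq η))

lemma cos04_ub : Real.cos 0.4 ≤ 0.9216 := by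
  have h1 := Real.cos_two_mul 0.2
  rw [show 2*(0.2:ℝ) = 0.4 by norm_num] at h1
  have h2 : (0.198:ℝ) ≤ Real.sin 0.2 := by
    have := Real.sin_gt_sub_cube (show (0:ℝ) < 0.2 by norm_num)
    nlinarith
  have h3 := Real.sin_sq_add_cos_sq (0.2:ℝ)
  nlinarith [Real.sin_le_one (0.2:ℝ)]

lemma cos04_lb : (0:ℝ) ≤ Real.cos 0.4 := by
  have := Real.one_sub_sq_div_two_le_cos (x := (0.4:ℝ))
  nlinarith

lemma mid_integral : ∫ η in (0.8:ℝ)..(2*π-0.8), Real.sin (η/2) * Real.cos (η/2)^2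
    = 4/3 * Real.cos 0.4 ^3 := by
  have hd : ∀ η ∈ Set.uIcc (0.8:ℝ) (2*π-0.8),
      HasDerivAt (fun η : ℝ => -(2/3) * Real.cos (η/2)^3)
        (Real.sin (η/2) * Real.cos (η/2)^2) η := by
    intro η _
    have h1 : HasDerivAt (fun η : ℝ => η/2) (1/2) η := (hasDerivAt_id η).div_const 2
    have h2 : HasDerivAt (fun η : ℝ => Real.cos (η/2)) (-Real.sin (η/2) * (1/2)) η :=
      h1.cos
    have h3 := ((h2.pow 3).const_mul (-(2/3) : ℝ))
    refine h3.congr_deriv ?_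
    ring
  rw [intervalIntegral.integral_eq_sub_of_hasDerivAt hd
    (by apply Continuous.intervalIntegrable; fun_prop)]
  rw [show (2*π - 0.8)/2 = π - 0.4 by ring, Real.cos_pi_sub]
  norm_num
  ring

/-- There exists `b* > 1/3` such that for every `b ∈ (0,b*)` and every `x ∈ (0,∞)`,
one has `φ_1(x) − b·φ_{1,b}(x) > 0`. -/
theorem phi1_sub_b_phi1b_pos :
    ∃ bs : ℝ, 1/3 < bs ∧ ∀ b ∈ Set.Ioo (0:ℝ) bs, ∀ x : ℝ, 0 < x →
      0 < phi1 x - b * phi1b b x := by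
  refine ⟨0.34, by norm_num, ?_⟩
  rintro b ⟨hb0, hb34⟩ x hx
  have hb1 : b < 1 := by linarith
  have hpi : (3.14:ℝ) < π := by linarith [Real.pi_gt_d6]
  have hIint : ∀ u v : ℝ, IntervalIntegrable (I b x) volume u v :=
    fun u v => (I_cont hb0 hb1 x).intervalIntegrable u v
  -- rewrite as a single integral of I
  have hA : phi1 x - b * phi1b b x = ∫ η in (0:ℝ)..(2*π), I b x η := by
    rw [ibp1, ibp2 hb0 hb1, ← intervalIntegral.integral_const_mul]
    rw [← intervalIntegral.integral_sub (μ := volume)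
      (f := fun η => x * Real.cos (η/2) * Real.sin η * Real.exp (-2*x*Real.sin (η/2)))
      (g := fun η => b * (x * b * Real.sin η ^ 2 * Real.exp (-x * Real.sqrt (1 + b^2 - 2*b*Real.cos η)) /
        Real.sqrt (1 + b^2 - 2*b*Real.cos η))) (by apply Continuous.intervalIntegrable; fun_prop)
      ((continuous_const.mul (phi1b_integrand_cont hb0 hb1 x)).intervalIntegrable _ _)]
    apply intervalIntegral.integral_congr
    intro η _
    unfold I
    ring
  -- split the integral
  have hsplit : (∫ η in (0:ℝ)..(2*π), I b x η) =
      (∫ η in (0:ℝ)..(0.8:ℝ), I b x η) + (∫ η in (0.8:ℝ)..(2*π-0.8), I b x η) +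
        (∫ η in (2*π-0.8:ℝ)..(2*π), I b x η) := by
    rw [intervalIntegral.integral_add_adjacent_intervals (hIint _ _) (hIint _ _),
      intervalIntegral.integral_add_adjacent_intervals (hIint _ _) (hIint _ _)]
  set E := Real.exp (-(0.8*x)) with hE_def
  have hEpos : 0 < E := Real.exp_pos _
  -- first piece
  have hB1 : 0.6985 * (x * E) * 0.32 ≤ ∫ η in (0:ℝ)..(0.8:ℝ), I b x η := by
    have hmono := intervalIntegral.integral_mono_on (by norm_num : (0:ℝ) ≤ 0.8)
      (by apply Continuous.intervalIntegrable; fun_prop) (hIint 0 0.8)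
      (fun t htt => good_bound hb0 hb34.le hx htt.1 htt.2)
    calc 0.6985 * (x * E) * 0.32
        = ∫ t in (0:ℝ)..(0.8:ℝ), 0.6985 * (x * E) * t := by
          rw [intervalIntegral.integral_const_mul, integral_id]; norm_num
      _ ≤ _ := hmono
  -- last piece equals first piece
  have hB3 : (∫ η in (2*π-0.8:ℝ)..(2*π), I b x η) = ∫ η in (0:ℝ)..(0.8:ℝ), I b x η := by
    have h := intervalIntegral.integral_comp_sub_left (a := (0:ℝ)) (b := (0.8:ℝ))
      (fun u => I b x u) (2*π)
    simp only [sub_zero] at h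
    rw [← h]
    apply intervalIntegral.integral_congr
    intro η _
    exact I_symm b x η
  -- middle piece
  have hB2 : -(0.3966 * (x * E)) * (4/3 * Real.cos 0.4 ^3) ≤
      ∫ η in (0.8:ℝ)..(2*π-0.8), I b x η := by
    have hlow : ∀ t ∈ Set.Icc (0.8:ℝ) (2*π-0.8),
        -(0.3966 * (x * E)) * (Real.sin (t/2) * Real.cos (t/2)^2) ≤ I b x t := by
      intro t htt
      have h := mid_bound hb0 hb34.le hx htt.1 htt.2
      rw [← hE_def] at h
      linarith [h]
    have hmono := intervalIntegral.integral_mono_on (by linarith : (0.8:ℝ) ≤ 2*π-0.8)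
      (by apply Continuous.intervalIntegrable; fun_prop) (hIint 0.8 (2*π-0.8)) hlow
    calc -(0.3966 * (x * E)) * (4/3 * Real.cos 0.4 ^3)
        = ∫ t in (0.8:ℝ)..(2*π-0.8),
            -(0.3966 * (x * E)) * (Real.sin (t/2) * Real.cos (t/2)^2) := by
          rw [intervalIntegral.integral_const_mul, mid_integral]
      _ ≤ _ := hmono
  -- numerics
  have hcos3 : Real.cos 0.4 ^ 3 ≤ 0.9216^3 := by
    have := pow_le_pow_left₀ cos04_lb cos04_ub 3
    simpa using this
  have hxE : 0 < x * E := mul_pos hx hEpos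
  have hsum : 0.033 * (x*E) ≤ (∫ η in (0:ℝ)..(0.8:ℝ), I b x η) +
      (∫ η in (0.8:ℝ)..(2*π-0.8), I b x η) + (∫ η in (2*π-0.8:ℝ)..(2*π), I b x η) := by
    rw [hB3]
    nlinarith [hB1, hB2, hcos3, hxE]
  rw [hA, hsplit]
  nlinarith [hsum, hxE]

end DCV18
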